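/- The only equilibrium states with ‖IΩ‖ = m ≠ 0 of the free rigid body with delay Ṁ = M×Ω + α M×(M̃×Ω̃) (where at equilibrium M̃ = M, Ω̃ = Ω) lying on a coordinate axis are Ω₁ = (m/I₁,0,0), Ω₂ = (0,m/I₂,0), Ω₃ = (0,0,m/I₃); more precisely, if I₁, I₂, I₃ are pairwise distinct and α ≠ 0, then a constant solution Ω satisfies (IΩ)×Ω + α (IΩ)×((IΩ)×Ω) = 0 if and only if Ω is a scalar multiple of a standard basis vector. -/

import Mathlib

set_option maxHeartbeats 800000


open Matrix

/-- For the free rigid body with delay, with pairwise distinct moments of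
inertia and `α ≠ 0`, a constant state `Ω` is an equilibrium, i.e.
`(IΩ)×Ω + α (IΩ)×((IΩ)×Ω) = 0`, iff `Ω` is a multiple of a standard basis
vector. -/
theorem stmt_5 (I₁ I₂ I₃ α : ℝ) (h1 : 0 < I₁) (h2 : 0 < I₂) (h3 : 0 < I₃)
    (h12 : I₁ ≠ I₂) (h13 : I₁ ≠ I₃) (h23 : I₂ ≠ I₃) (hα : α ≠ 0)
    (Ω : Fin 3 → ℝ) (M : Fin 3 → ℝ)
    (hM : M = fun i => ![I₁, I₂, I₃] i * Ω i) :
    (M ⨯₃ Ω + α • (M ⨯₃ (M ⨯₃ Ω)) = 0) ↔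
      ∃ (i : Fin 3) (c : ℝ), Ω = c • (Pi.single i 1 : Fin 3 → ℝ) := by
  subst hM
  constructor
  · intro h
    have h0 := congrFun h 0
    have h1' := congrFun h 1
    have h2' := congrFun h 2
    simp [cross_apply] at h0 h1' h2'
    set a := Ω 0 with ha
    set b := Ω 1 with hb
    set c := Ω 2 with hc
    -- components of M ×₃ Ω
    set p := I₂ * b * c - I₃ * c * b with hp
    set q := I₃ * c * a - I₁ * a * c with hq
    set r := I₁ * a * b - I₂ * b * a with hr
    have hsum : p ^ 2 + q ^ 2 + r ^ 2 = 0 := by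
      linear_combination p * h0 + q * h1' + r * h2'
    have hp0 : p = 0 := by
      have : p ^ 2 = 0 := by nlinarith [sq_nonneg q, sq_nonneg r]
      exact pow_eq_zero_iff (by norm_num) |>.mp this
    have hq0 : q = 0 := by
      have : q ^ 2 = 0 := by nlinarith [sq_nonneg p, sq_nonneg r]
      exact pow_eq_zero_iff (by norm_num) |>.mp this
    have hr0 : r = 0 := by
      have : r ^ 2 = 0 := by nlinarith [sq_nonneg p, sq_nonneg q]
      exact pow_eq_zero_iff (by norm_num) |>.mp this
    have hbc : b * c = 0 := by
      have : (I₂ - I₃) * (b * c) = 0 := by rw [hp] at hp0; linear_combination hp0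
      rcases mul_eq_zero.mp this with h | h
      · exact absurd (by linarith : I₂ = I₃) h23
      · exact h
    have hca : c * a = 0 := by
      have : (I₃ - I₁) * (c * a) = 0 := by rw [hq] at hq0; linear_combination hq0
      rcases mul_eq_zero.mp this with h | h
      · exact absurd (by linarith : I₁ = I₃) h13
      · exact h
    have hab : a * b = 0 := by
      have : (I₁ - I₂) * (a * b) = 0 := by rw [hr] at hr0; linear_combination hr0
      rcases mul_eq_zero.mp this with h | h
      · exact absurd (by linarith : I₁ = I₂) h12
      · exact h
    by_cases haz : a = 0
    · rcases mul_eq_zero.mp hbc with hbz | hcz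
      · exact ⟨2, c, funext fun i => by fin_cases i <;> simp [← ha, ← hb, ← hc, haz, hbz]⟩
      · exact ⟨1, b, funext fun i => by fin_cases i <;> simp [← ha, ← hb, ← hc, haz, hcz]⟩
    · have hbz : b = 0 := by
        rcases mul_eq_zero.mp hab with h | h
        · exact absurd h haz
        · exact h
      have hcz : c = 0 := by
        rcases mul_eq_zero.mp hca with h | h
        · exact h
        · exact absurd h haz
      exact ⟨0, a, funext fun i => by fin_cases i <;> simp [← ha, ← hb, ← hc, hbz, hcz]⟩
  · rintro ⟨i, c, rfl⟩
    have : (fun j => ![I₁, I₂, I₃] j * (c • (Pi.single i 1 : Fin 3 → ℝ)) j) ⨯₃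
        (c • (Pi.single i 1 : Fin 3 → ℝ)) = 0 := by
      fin_cases i <;> (funext j; fin_cases j <;> simp [cross_apply, Pi.single_apply])
    rw [this]
    simp
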